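/- Let 𝒞 and 𝒞' be subsets of ℝ^{n_x×n_h} such that {Δ⊤ : Δ ∈ 𝒞} and {Δ⊤ : Δ ∈ 𝒞'} are matrix ellipsoids, and let Δ̄, Δ̄' ∈ ℝ^{n_x×n_h} be such that Δ̄⊤ and (Δ̄')⊤ are their respective centers. Suppose 𝒞' ⊆ 𝒞. Let K ∈ ℝ^{n_u×n_x} and let 𝒳 ⊆ ℝ^{n_x}, 𝒰 ⊆ ℝ^{n_u}, 𝒲 ⊆ ℝ^{n_x} be arbitrary sets. Define V(𝒞) := {(Δ − Δ̄)[x̄; ū] + w : Δ ∈ 𝒞, x̄ ∈ 𝒳, ū ∈ 𝒰, w ∈ 𝒲} and V(𝒞') analogously with center Δ̄', and for a set E ⊆ ℝ^{n_x} define Φ(𝒞, E) := {Δ [I_{n_x}; K] e + v : Δ ∈ 𝒞, e ∈ E, v ∈ V(𝒞)} and Φ(𝒞', E) analogously. Then V(𝒞') ⊆ V(𝒞), and for any sets E' ⊆ E ⊆ ℝ^{n_x} one has Φ(𝒞', E') ⊆ Φ(𝒞, E). -/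

import Mathlib

open Matrix

lemma psd_smul {m : Type*} [Fintype m] {c : ℝ} (hc : 0 ≤ c) {A : Matrix m m ℝ}
    (hA : A.PosSemidef) : (c • A).PosSemidef := by
  refine ⟨?_, fun x => ?_⟩
  · unfold Matrix.IsHermitian
    rw [conjTranspose_smul, hA.1.eq]
    simp
  · convert mul_nonneg hc (hA.2 x) using 1
    simp only [Finsupp.sum, Finset.mul_sum, Matrix.smul_apply, smul_eq_mul, star_trivial]
    exact Finset.sum_congr rfl fun i _ => Finset.sum_congr rfl fun j _ => by ring

lemma quad_rewrite {p q : Type*} [Fintype p] [Fintype q] [DecidableEq p]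
    (E : Matrix p p ℝ) (F : Matrix p q ℝ) (G : Matrix q q ℝ)
    (hE : E.IsHermitian) (hPD : E.PosDef) (Z : Matrix p q ℝ) :
    -(Zᵀ * E * Z + Zᵀ * F + Fᵀ * Z + G)
      = (Fᵀ * E⁻¹ * F - G) - (Z + E⁻¹ * F)ᵀ * E * (Z + E⁻¹ * F) := by
  have hdet : IsUnit E.det := isUnit_iff_ne_zero.mpr (ne_of_gt hPD.det_pos)
  have hEt : Eᵀ = E := by
    rw [← conjTranspose_eq_transpose_of_trivial]; exact hE.eq
  have h1 : E * (E⁻¹ * F) = F := by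
    rw [← Matrix.mul_assoc, Matrix.mul_nonsing_inv E hdet, Matrix.one_mul]
  have h2 : (E⁻¹ * F)ᵀ * E = Fᵀ := by
    rw [Matrix.transpose_mul, Matrix.mul_assoc, Matrix.transpose_nonsing_inv, hEt,
      Matrix.nonsing_inv_mul E hdet, Matrix.mul_one]
  have h3 : (E⁻¹ * F)ᵀ * E * (E⁻¹ * F) = Fᵀ * E⁻¹ * F := by
    rw [h2, Matrix.mul_assoc]
  rw [Matrix.transpose_add, Matrix.add_mul, Matrix.add_mul, Matrix.mul_add, Matrix.mul_add, h3]
  have h4 : Zᵀ * E * (E⁻¹ * F) = Zᵀ * F := by rw [Matrix.mul_assoc, h1]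
  rw [h4]
  have h5 : (E⁻¹ * F)ᵀ * E * Z = Fᵀ * Z := by
    rw [show (E⁻¹ * F)ᵀ * E * Z = ((E⁻¹ * F)ᵀ * E) * Z from rfl, h2]
  rw [h5]
  abel


/-- `S` is a matrix ellipsoid with center `Zc`: for some symmetric `E ≻ 0`, `F`, and
symmetric `G` with `FᵀE⁻¹F − G ≻ 0`,
`S = {Z : ZᵀEZ + ZᵀF + FᵀZ + G ⪯ 0}` and `Zc = −E⁻¹F`. -/
def IsMatrixEllipsoidWithCenter {p q : Type*} [Fintype p] [Fintype q] [DecidableEq p]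
    (S : Set (Matrix p q ℝ)) (Zc : Matrix p q ℝ) : Prop :=
  ∃ (E : Matrix p p ℝ) (F : Matrix p q ℝ) (G : Matrix q q ℝ),
    E.IsHermitian ∧ G.IsHermitian ∧ E.PosDef ∧ (Fᵀ * E⁻¹ * F - G).PosDef ∧
    S = {Z | (-(Zᵀ * E * Z + Zᵀ * F + Fᵀ * Z + G)).PosSemidef} ∧ Zc = -(E⁻¹ * F)


/-- Membership in an ellipsoid in centered form. -/
lemma mem_ellipsoid_iff {p q : Type*} [Fintype p] [Fintype q] [DecidableEq p]
    {S : Set (Matrix p q ℝ)} {c : Matrix p q ℝ}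
    (h : IsMatrixEllipsoidWithCenter S c) :
    ∃ (E : Matrix p p ℝ) (D : Matrix q q ℝ), E.PosDef ∧
      ∀ Z, Z ∈ S ↔ (D - (Z - c)ᵀ * E * (Z - c)).PosSemidef := by
  obtain ⟨E, F, G, hE, hG, hPD, hD, hSeq, hceq⟩ := h
  refine ⟨E, Fᵀ * E⁻¹ * F - G, hPD, fun Z => ?_⟩
  have : Z - c = Z + E⁻¹ * F := by rw [hceq, sub_neg_eq_add]
  rw [hSeq, Set.mem_setOf_eq, quad_rewrite E F G hE hPD Z, this]

/-- Key convexity/symmetry lemma: if `S' ⊆ S` are ellipsoids with centers `c'`, `c`,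
then for `z ∈ S'`, the translate `c + (z - c')` lies in `S`. -/
lemma ellipsoid_translate {p q : Type*} [Fintype p] [Fintype q] [DecidableEq p]
    {S S' : Set (Matrix p q ℝ)} {c c' : Matrix p q ℝ}
    (hS : IsMatrixEllipsoidWithCenter S c) (hS' : IsMatrixEllipsoidWithCenter S' c')
    (hsub : S' ⊆ S) {z : Matrix p q ℝ} (hz : z ∈ S') : c + (z - c') ∈ S := by
  obtain ⟨E, D, hPD, hmem⟩ := mem_ellipsoid_iff hS
  obtain ⟨E', D', hPD', hmem'⟩ := mem_ellipsoid_iff hS'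
  have hb : c' - (z - c') ∈ S' := by
    rw [hmem']
    have : (c' - (z - c')) - c' = -(z - c') := by abel
    rw [this]
    simp only [transpose_neg, Matrix.neg_mul, Matrix.mul_neg, neg_neg]
    exact (hmem' z).mp hz
  have Pa : (D - (z - c)ᵀ * E * (z - c)).PosSemidef := (hmem z).mp (hsub hz)
  have Pb : (D - ((c' - (z - c')) - c)ᵀ * E * ((c' - (z - c')) - c)).PosSemidef :=
    (hmem _).mp (hsub hb)
  rw [hmem]
  set Ya := z - c with hYa
  set Yb := (c' - (z - c')) - c with hYb
  set Y := (c + (z - c')) - c with hY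
  have hYeq : Y = z - c' := by rw [hY]; abel
  have hdiff : Ya - Yb = 2 • Y := by rw [hYa, hYb, hYeq]; abel
  have key : D - Yᵀ * E * Y
      = (1/2 : ℝ) • (D - Yaᵀ * E * Ya) + (1/2 : ℝ) • (D - Ybᵀ * E * Yb)
        + ((1/2 : ℝ) • (Ya + Yb))ᵀ * E * ((1/2 : ℝ) • (Ya + Yb)) := by
    have hYb2 : Yb = Ya - 2 • Y := by rw [← hdiff]; abel
    rw [hYb2]
    simp only [transpose_sub, transpose_smul, transpose_add, Matrix.sub_mul, Matrix.mul_sub,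
      Matrix.smul_mul, Matrix.mul_smul, smul_sub, smul_add, smul_smul, Matrix.add_mul,
      Matrix.mul_add]
    module
  rw [key]
  refine ((psd_smul (by norm_num) Pa).add (psd_smul (by norm_num) Pb)).add ?_
  have := hPD.posSemidef.conjTranspose_mul_mul_same ((1/2 : ℝ) • (Ya + Yb))
  rwa [conjTranspose_eq_transpose_of_trivial] at this

/-- The uncertainty set `V(𝒞) := {(Δ − Δ̄)[x̄; ū] + w : Δ ∈ 𝒞, x̄ ∈ 𝒳, ū ∈ 𝒰, w ∈ 𝒲}`. -/
def Vset (n_x n_u : ℕ) (X : Set (Fin n_x → ℝ)) (U : Set (Fin n_u → ℝ))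
    (W : Set (Fin n_x → ℝ)) (C : Set (Matrix (Fin n_x) (Fin n_x ⊕ Fin n_u) ℝ))
    (Δb : Matrix (Fin n_x) (Fin n_x ⊕ Fin n_u) ℝ) : Set (Fin n_x → ℝ) :=
  {v | ∃ Δ ∈ C, ∃ x ∈ X, ∃ u ∈ U, ∃ w ∈ W, v = (Δ - Δb).mulVec (Sum.elim x u) + w}

/-- The one-step reachable error set
`Φ(𝒞, E) := {Δ [I; K] e + v : Δ ∈ 𝒞, e ∈ E, v ∈ V(𝒞)}`. -/
def PhiSet (n_x n_u : ℕ) (K : Matrix (Fin n_u) (Fin n_x) ℝ)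
    (X : Set (Fin n_x → ℝ)) (U : Set (Fin n_u → ℝ)) (W : Set (Fin n_x → ℝ))
    (C : Set (Matrix (Fin n_x) (Fin n_x ⊕ Fin n_u) ℝ))
    (Δb : Matrix (Fin n_x) (Fin n_x ⊕ Fin n_u) ℝ)
    (E : Set (Fin n_x → ℝ)) : Set (Fin n_x → ℝ) :=
  {y | ∃ Δ ∈ C, ∃ e ∈ E, ∃ v ∈ Vset n_x n_u X U W C Δb,
    y = Δ.mulVec (Sum.elim e (K.mulVec e)) + v}

/-- If `𝒞' ⊆ 𝒞` are sets whose transposed copies are matrix ellipsoids with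
(transposed) centers `Δ̄'`, `Δ̄`, then `V(𝒞') ⊆ V(𝒞)`, and for any `E' ⊆ E`,
`Φ(𝒞', E') ⊆ Φ(𝒞, E)`. -/
theorem stmt17 (n_x n_u : ℕ) (hx : 0 < n_x) (hu : 0 < n_u)
    (C C' : Set (Matrix (Fin n_x) (Fin n_x ⊕ Fin n_u) ℝ))
    (Δb Δb' : Matrix (Fin n_x) (Fin n_x ⊕ Fin n_u) ℝ)
    (hC : IsMatrixEllipsoidWithCenter ((fun Δ => Δᵀ) '' C) Δbᵀ)
    (hC' : IsMatrixEllipsoidWithCenter ((fun Δ => Δᵀ) '' C') Δb'ᵀ)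
    (hsub : C' ⊆ C)
    (K : Matrix (Fin n_u) (Fin n_x) ℝ)
    (X : Set (Fin n_x → ℝ)) (U : Set (Fin n_u → ℝ)) (W : Set (Fin n_x → ℝ)) :
    Vset n_x n_u X U W C' Δb' ⊆ Vset n_x n_u X U W C Δb ∧
    ∀ E' E : Set (Fin n_x → ℝ), E' ⊆ E →
      PhiSet n_x n_u K X U W C' Δb' E' ⊆ PhiSet n_x n_u K X U W C Δb E := by
  have key : ∀ Δ' ∈ C', ∃ Δ ∈ C, Δ - Δb = Δ' - Δb' := by
    intro Δ' hΔ'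
    have hz : Δ'ᵀ ∈ (fun Δ => Δᵀ) '' C' := ⟨Δ', hΔ', rfl⟩
    have hsub' : ((fun Δ => Δᵀ) '' C' : Set _) ⊆ (fun Δ => Δᵀ) '' C :=
      Set.image_mono hsub
    obtain ⟨Δ, hΔ, hEq⟩ := ellipsoid_translate hC hC' hsub' hz
    have hEq2 : Δᵀ = Δbᵀ + (Δ'ᵀ - Δb'ᵀ) := hEq
    refine ⟨Δ, hΔ, ?_⟩
    have ht : (Δ - Δb)ᵀ = (Δ' - Δb')ᵀ := by
      rw [Matrix.transpose_sub, Matrix.transpose_sub, hEq2]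
      abel
    have := congrArg Matrix.transpose ht
    simpa using this
  have hV : Vset n_x n_u X U W C' Δb' ⊆ Vset n_x n_u X U W C Δb := by
    rintro v ⟨Δ', hΔ', x, hx, u, hu, w, hw, rfl⟩
    obtain ⟨Δ, hΔ, hEq⟩ := key Δ' hΔ'
    exact ⟨Δ, hΔ, x, hx, u, hu, w, hw, by rw [hEq]⟩
  refine ⟨hV, ?_⟩
  rintro E' E hEE y ⟨Δ', hΔ', e, he, v, hv, rfl⟩
  exact ⟨Δ', hsub hΔ', e, hEE he, v, hV hv, rfl⟩
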